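/- Suppose 0 < ε < a ≤ 1. Then Φ(a, ε, x) ≥ x · log(a/ε) for all x ∈ [0, aε]. -/

import Mathlib

noncomputable section

/-- The two-level entropy functional
`Φ(a,ε,x) = λ₊ log λ₊ + λ₋ log λ₋ − a log a − ε log ε`, where
`λ± = (a + ε ± √((a−ε)² + 4x))/2` (with `0 log 0 = 0` via `Real.log 0 = 0`). -/
def Phi (a ε x : ℝ) : ℝ :=
  ((a + ε + Real.sqrt ((a - ε) ^ 2 + 4 * x)) / 2) *
      Real.log ((a + ε + Real.sqrt ((a - ε) ^ 2 + 4 * x)) / 2) +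
    ((a + ε - Real.sqrt ((a - ε) ^ 2 + 4 * x)) / 2) *
      Real.log ((a + ε - Real.sqrt ((a - ε) ^ 2 + 4 * x)) / 2) -
    a * Real.log a - ε * Real.log ε

private lemma key_ineq (a ε : ℝ) (hε : 0 < ε) (hεa : ε < a) (ha : a ≤ 1) :
    ∀ δ ∈ Set.Icc (0 : ℝ) ε,
      δ * (a - ε + δ) * (Real.log a - Real.log ε) ≤
        (a + δ) * Real.log (a + δ) + (ε - δ) * Real.log (ε - δ)
          - a * Real.log a - ε * Real.log ε := by
  have ha0 : (0:ℝ) < a := lt_trans hε hεa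
  set L : ℝ := Real.log a - Real.log ε with hL
  set F : ℝ → ℝ := fun t =>
    (a + t) * Real.log (a + t) + (ε - t) * Real.log (ε - t)
      - a * Real.log a - ε * Real.log ε - t * (a - ε + t) * L with hF
  -- continuity of F
  have hc : Continuous F := by
    have h1 : Continuous fun t : ℝ => (a + t) * Real.log (a + t) :=
      Real.continuous_mul_log.comp (continuous_const.add continuous_id)
    have h2 : Continuous fun t : ℝ => (ε - t) * Real.log (ε - t) :=
      Real.continuous_mul_log.comp (continuous_const.sub continuous_id)
    have h3 : Continuous fun t : ℝ => t * (a - ε + t) * L :=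
      ((continuous_id.mul (continuous_const.add continuous_id)).mul continuous_const)
    exact (((h1.add h2).sub continuous_const).sub continuous_const).sub h3
  -- derivative of F on (0, ε)
  have hderiv : ∀ t ∈ Set.Ioo (0:ℝ) ε,
      HasDerivAt F ((Real.log (a + t) + 1) * 1 + (Real.log (ε - t) + 1) * (-1)
        - (1 * (a - ε + t) + t * 1) * L) t := by
    intro t ht
    have hat : (0:ℝ) < a + t := by linarith [ht.1]
    have het : (0:ℝ) < ε - t := by linarith [ht.2]
    have hA : HasDerivAt (fun s : ℝ => (a + s) * Real.log (a + s))
        ((Real.log (a + t) + 1) * 1) t := by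
      have := (Real.hasDerivAt_mul_log (ne_of_gt hat)).comp t
        ((hasDerivAt_id t).const_add a)
      simpa [Function.comp_def] using this
    have hB : HasDerivAt (fun s : ℝ => (ε - s) * Real.log (ε - s))
        ((Real.log (ε - t) + 1) * (-1)) t := by
      have := (Real.hasDerivAt_mul_log (ne_of_gt het)).comp t
        ((hasDerivAt_id t).const_sub ε)
      simpa [Function.comp_def] using this
    have hC : HasDerivAt (fun s : ℝ => s * (a - ε + s) * L)
        ((1 * (a - ε + t) + t * 1) * L) t := by
      simpa using (((hasDerivAt_id t).mul ((hasDerivAt_const t (a - ε)).add (hasDerivAt_id t)))).mul_const L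
    exact (((hA.add hB).sub_const (a * Real.log a)).sub_const (ε * Real.log ε)).sub hC
  -- the derivative is nonnegative on (0, ε)
  have hpos : ∀ t ∈ Set.Ioo (0:ℝ) ε,
      0 ≤ (Real.log (a + t) + 1) * 1 + (Real.log (ε - t) + 1) * (-1)
        - (1 * (a - ε + t) + t * 1) * L := by
    intro t ht
    have hat : (0:ℝ) < a + t := by linarith [ht.1]
    have het : (0:ℝ) < ε - t := by linarith [ht.2]
    have h1 : Real.log a ≤ Real.log (a + t) :=
      Real.log_le_log ha0 (by linarith [ht.1])
    have h2 : Real.log (ε - t) ≤ Real.log ε - t / ε := by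
      have hd : Real.log ((ε - t) / ε) ≤ (ε - t) / ε - 1 :=
        Real.log_le_sub_one_of_pos (by positivity)
      rw [Real.log_div (ne_of_gt het) (ne_of_gt hε)] at hd
      have : (ε - t) / ε = 1 - t / ε := by field_simp
      rw [this] at hd; linarith
    have h3 : L ≤ 1 / ε := by
      have hd : Real.log (a / ε) ≤ a / ε - 1 :=
        Real.log_le_sub_one_of_pos (by positivity)
      rw [Real.log_div (ne_of_gt ha0) (ne_of_gt hε)] at hd
      have : a / ε ≤ 1 / ε := (div_le_div_iff_of_pos_right hε).mpr ha
      simp only [hL]; linarith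
    have h4 : 0 ≤ L := by
      simp only [hL]; linarith [Real.log_le_log hε (le_of_lt hεa)]
    have h5 : a - ε + 2 * t - 1 ≤ t := by linarith [ht.2]
    have h6 : (a - ε + 2 * t - 1) * L ≤ t / ε := by
      rcases le_or_gt (a - ε + 2 * t - 1) 0 with h | h
      · have := mul_nonpos_of_nonpos_of_nonneg h h4
        have : (0:ℝ) ≤ t / ε := div_nonneg ht.1.le hε.le
        nlinarith
      · calc (a - ε + 2 * t - 1) * L ≤ t * L := by nlinarith
          _ ≤ t * (1 / ε) := by nlinarith [ht.1]
          _ = t / ε := by ring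
    have key : Real.log a - (Real.log ε - t / ε) - (L + t / ε) ≤
        Real.log (a + t) - Real.log (ε - t) - (a - ε + 2 * t) * L := by
      have : (a - ε + 2*t) * L = L + (a - ε + 2*t - 1) * L := by ring
      nlinarith
    have : (0:ℝ) ≤ Real.log a - (Real.log ε - t / ε) - (L + t / ε) := by
      simp only [hL]; ring_nf; linarith
    nlinarith
  -- F is monotone on [0, ε]
  have hmono : MonotoneOn F (Set.Icc 0 ε) := by
    apply monotoneOn_of_deriv_nonneg (convex_Icc 0 ε) hc.continuousOn
    · intro t ht
      rw [interior_Icc] at ht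
      exact (hderiv t ht).differentiableAt.differentiableWithinAt
    · intro t ht
      rw [interior_Icc] at ht
      rw [(hderiv t ht).deriv]
      exact hpos t ht
  intro δ hδ
  have hF0 : F 0 = 0 := by simp [hF]
  have := hmono (Set.left_mem_Icc.2 (le_of_lt hε)) hδ hδ.1
  rw [hF0] at this
  simp only [hF] at this
  linarith

/-- For `0 < ε < a ≤ 1`, `Φ(a,ε,x) ≥ x log(a/ε)` for all `x ∈ [0, aε]`. -/
theorem Phi_ge_log_ratio (a ε : ℝ) (hε : 0 < ε) (hεa : ε < a) (ha : a ≤ 1) :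
    ∀ x ∈ Set.Icc (0 : ℝ) (a * ε), Phi a ε x ≥ x * Real.log (a / ε) := by
  have ha0 : (0:ℝ) < a := lt_trans hε hεa
  intro x hx
  set s : ℝ := Real.sqrt ((a - ε) ^ 2 + 4 * x) with hs
  have hnn : (0:ℝ) ≤ (a - ε) ^ 2 + 4 * x := by nlinarith [hx.1]
  have hs2 : s ^ 2 = (a - ε) ^ 2 + 4 * x := Real.sq_sqrt hnn
  have hslb : a - ε ≤ s := by
    have : Real.sqrt ((a - ε) ^ 2) ≤ s := Real.sqrt_le_sqrt (by nlinarith [hx.1])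
    rwa [Real.sqrt_sq (by linarith : (0:ℝ) ≤ a - ε)] at this
  have hsub : s ≤ a + ε := by
    have h1 : (a - ε) ^ 2 + 4 * x ≤ (a + ε) ^ 2 := by nlinarith [hx.2]
    have := Real.sqrt_le_sqrt h1
    rwa [Real.sqrt_sq (by linarith : (0:ℝ) ≤ a + ε)] at this
  set δ : ℝ := (s - (a - ε)) / 2 with hδdef
  have hsδ : s = a - ε + 2 * δ := by simp [hδdef]; ring
  have hδ0 : 0 ≤ δ := by simp [hδdef]; linarith
  have hδε : δ ≤ ε := by simp only [hδdef]; linarith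
  have hxδ : x = δ * (a - ε + δ) := by nlinarith [hs2, hsδ]
  have hlp : (a + ε + s) / 2 = a + δ := by rw [hsδ]; ring
  have hlm : (a + ε - s) / 2 = ε - δ := by rw [hsδ]; ring
  have hkey := key_ineq a ε hε hεa ha δ ⟨hδ0, hδε⟩
  rw [ge_iff_le, Phi, ← hs, hlp, hlm, hxδ, Real.log_div (ne_of_gt ha0) (ne_of_gt hε)]
  linarith
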